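/- Define ℓ(0) = 0 and, for n ≥ 1, ℓ(n) = 1 + max{i ∈ ℤ : d_i(n) = 1} (the length of the left part of the canonical φ-representation of n). Then for every n ≥ 1, ℓ(n) − ℓ(n−1) = 1 if and only if n = 1, or n = L_{2i} for some i ≥ 1, or n = L_{2i−1} + 1 for some i ≥ 1. -/
import Mathlib


/-- The golden ratio φ = (1+√5)/2. -/
noncomputable def phi : ℝ := (1 + Real.sqrt 5) / 2

/-- `a` is a finite φ-representation of the real number `x`: a finitely supported
function `a : ℤ → {0,1}` with `x = Σ_{i ∈ ℤ} a(i) · φ^i`. -/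
def IsPhiRep (x : ℝ) (a : ℤ →₀ ℕ) : Prop :=
  (∀ i, a i ≤ 1) ∧ x = ∑ i ∈ a.support, (a i : ℝ) * phi ^ i

/-- `a` is the canonical φ-representation of `x`: a finite φ-representation with
no two adjacent digits equal to 1. -/
def IsCanonRep (x : ℝ) (a : ℤ →₀ ℕ) : Prop :=
  IsPhiRep x a ∧ ∀ i : ℤ, a i * a (i + 1) = 0

/-- Lucas numbers: L₀ = 2, L₁ = 1, L_{n+2} = L_{n+1} + L_n. -/
def lucas : ℕ → ℕ
  | 0 => 2
  | 1 => 1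
  | n + 2 => lucas (n + 1) + lucas n

noncomputable def psi : ℝ := (1 - Real.sqrt 5) / 2

lemma sqrt5_sq : Real.sqrt 5 ^ 2 = 5 := Real.sq_sqrt (by norm_num)
lemma sqrt5_gt : 2 < Real.sqrt 5 := by
  nlinarith [sqrt5_sq, Real.sqrt_nonneg 5]
lemma sqrt5_lt : Real.sqrt 5 < 3 := by
  nlinarith [sqrt5_sq, Real.sqrt_nonneg 5]
lemma phi_gt_one : 1 < phi := by unfold phi; nlinarith [sqrt5_gt]
lemma phi_pos : 0 < phi := lt_trans one_pos phi_gt_one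
lemma phi_ne : phi ≠ 0 := ne_of_gt phi_pos
lemma phi_sq : phi ^ 2 = phi + 1 := by unfold phi; nlinarith [sqrt5_sq]
lemma psi_neg : psi < 0 := by unfold psi; nlinarith [sqrt5_gt]
lemma psi_abs_lt : |psi| < 1 := by
  rw [abs_lt]; unfold psi; constructor <;> nlinarith [sqrt5_lt, sqrt5_gt]
lemma psi_sq : psi ^ 2 = psi + 1 := by unfold psi; nlinarith [sqrt5_sq]

lemma phi_pow_add_two (k : ℕ) : phi ^ (k + 2) = phi ^ (k + 1) + phi ^ k := by
  have h : phi ^ (k + 2) = phi ^ k * phi ^ 2 := by ring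
  rw [h, phi_sq]; ring

lemma psi_pow_add_two (k : ℕ) : psi ^ (k + 2) = psi ^ (k + 1) + psi ^ k := by
  have h : psi ^ (k + 2) = psi ^ k * psi ^ 2 := by ring
  rw [h, psi_sq]; ring

lemma lucas_real : ∀ k : ℕ, (lucas k : ℝ) = phi ^ k + psi ^ k
  | 0 => by norm_num [lucas]
  | 1 => by
      simp only [lucas, pow_one]; unfold phi psi; push_cast; ring
  | (k + 2) => by
      rw [show lucas (k+2) = lucas (k+1) + lucas k from rfl]
      push_cast
      rw [lucas_real (k+1), lucas_real k, phi_pow_add_two, psi_pow_add_two]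
      ring

lemma psi_pow_lt_one (k : ℕ) (hk : 1 ≤ k) : |psi ^ k| < 1 := by
  rw [abs_pow]
  exact pow_lt_one₀ (abs_nonneg _) psi_abs_lt (by omega)

lemma psi_pow_even_pos (i : ℕ) : 0 < psi ^ (2 * i) := by
  have h : psi ^ (2 * i) = (psi ^ i) ^ 2 := by ring
  have hne : psi ^ i ≠ 0 := pow_ne_zero i (ne_of_lt psi_neg)
  rw [h]
  positivity

lemma psi_pow_odd_neg (j : ℕ) : psi ^ (2 * j + 1) < 0 :=
  Odd.pow_neg ⟨j, by ring⟩ psi_neg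

lemma one_le_phi_pow (k : ℕ) : 1 ≤ phi ^ k := one_le_pow₀ (le_of_lt phi_gt_one)

lemma unique_exp {x : ℝ} {a b : ℕ} (h1 : phi ^ a ≤ x) (h2 : x < phi ^ (a + 1))
    (h3 : phi ^ b ≤ x) (h4 : x < phi ^ (b + 1)) : a = b := by
  have hab : a < b + 1 := by
    have := lt_of_le_of_lt h1 h4
    exact (pow_lt_pow_iff_right₀ phi_gt_one).mp this
  have hba : b < a + 1 := by
    have := lt_of_le_of_lt h3 h2
    exact (pow_lt_pow_iff_right₀ phi_gt_one).mp this
  omega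

lemma phi_pow_le_lucas : ∀ k : ℕ, 1 ≤ k → phi ^ (k - 1) ≤ (lucas k : ℝ)
  | 0, h => by omega
  | 1, _ => by norm_num [lucas]
  | (k + 2), _ => by
      have h1 := lucas_real (k + 2)
      have h2 := psi_pow_lt_one (k + 2) (by omega)
      rw [abs_lt] at h2
      have h3 := phi_pow_add_two k
      have h4 := one_le_phi_pow k
      show phi ^ (k + 1) ≤ (lucas (k + 2) : ℝ)
      linarith

lemma sum_bound : ∀ S : Finset ℤ, ∀ i : ℤ, (∀ j ∈ S, j ≤ i) → (∀ j ∈ S, j + 1 ∉ S) →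
    ∑ j ∈ S, phi ^ j < phi ^ (i + 1) := by
  intro S
  induction S using Finset.strongInduction with
  | _ S ih =>
    intro i hle hadj
    rcases S.eq_empty_or_nonempty with rfl | hne
    · simpa using zpow_pos phi_pos (i + 1)
    · set m := S.max' hne with hm
      have hmS : m ∈ S := S.max'_mem hne
      have hmi : m ≤ i := hle m hmS
      have hsub : S.erase m ⊂ S := Finset.erase_ssubset hmS
      have h1 : ∀ j ∈ S.erase m, j ≤ m - 2 := by
        intro j hj
        have hjS := Finset.mem_of_mem_erase hj
        have hjne := Finset.ne_of_mem_erase hj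
        have hjm : j ≤ m := S.le_max' j hjS
        by_contra hcon
        push_neg at hcon
        have hj1 : j = m - 1 := by omega
        exact hadj j hjS (by rw [hj1]; simpa using hmS)
      have h2 : ∀ j ∈ S.erase m, j + 1 ∉ S.erase m := fun j hj h =>
        hadj j (Finset.mem_of_mem_erase hj) (Finset.mem_of_mem_erase h)
      have hrec := ih _ hsub (m - 2) h1 h2
      have hm1 : m - 2 + 1 = m - 1 := by ring
      rw [hm1] at hrec
      have hsum : ∑ j ∈ S, phi ^ j = phi ^ m + ∑ j ∈ S.erase m, phi ^ j :=
        (Finset.add_sum_erase S _ hmS).symm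
      have hid : phi ^ m + phi ^ (m - 1) = phi ^ (m + 1) := by
        have e0 : m + 1 = (m - 1) + 2 := by ring
        have e1 : phi ^ (m + 1) = phi ^ (m - 1) * phi ^ (2 : ℤ) := by
          rw [e0, zpow_add₀ phi_ne]
        have e2 : phi ^ m = phi ^ (m - 1) * phi := by
          rw [show m = (m - 1) + 1 by ring, zpow_add_one₀ phi_ne]; norm_num
        have e3 : phi ^ (2 : ℤ) = phi + 1 := by
          rw [show (2:ℤ) = ((2:ℕ):ℤ) by norm_num, zpow_natCast, phi_sq]
        rw [e1, e2, e3]; ring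
      have hmono : phi ^ (m + 1) ≤ phi ^ (i + 1) :=
        zpow_le_zpow_right₀ (le_of_lt phi_gt_one) (by omega)
      calc ∑ j ∈ S, phi ^ j = phi ^ m + ∑ j ∈ S.erase m, phi ^ j := hsum
        _ < phi ^ m + phi ^ (m - 1) := by linarith
        _ = phi ^ (m + 1) := hid
        _ ≤ phi ^ (i + 1) := hmono

lemma bracket {x : ℝ} {a : ℤ →₀ ℕ} (h : IsCanonRep x a) {i : ℤ}
    (h1 : a i = 1) (hmax : ∀ j, a j = 1 → j ≤ i) :
    phi ^ i ≤ x ∧ x < phi ^ (i + 1) := by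
  obtain ⟨⟨hdig, hsum⟩, hadj⟩ := h
  have hsupp : ∀ j, j ∈ a.support ↔ a j = 1 := by
    intro j; rw [Finsupp.mem_support_iff]
    constructor
    · intro h; have := hdig j; omega
    · intro h; omega
  constructor
  · rw [hsum]
    have hiS : i ∈ a.support := (hsupp i).mpr h1
    have hle : (a i : ℝ) * phi ^ i ≤ ∑ j ∈ a.support, (a j : ℝ) * phi ^ j :=
      Finset.single_le_sum (f := fun j => (a j : ℝ) * phi ^ j)
        (fun j _ => mul_nonneg (Nat.cast_nonneg _) (le_of_lt (zpow_pos phi_pos j))) hiS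
    rw [h1] at hle; simpa using hle
  · rw [hsum]
    have heq : ∀ j ∈ a.support, (a j : ℝ) * phi ^ j = phi ^ j := by
      intro j hj; rw [(hsupp j).mp hj]; simp
    rw [Finset.sum_congr rfl heq]
    exact sum_bound a.support i (fun j hj => hmax j ((hsupp j).mp hj))
      (fun j hj hj1 => by
        have e1 := (hsupp j).mp hj
        have e2 := (hsupp (j+1)).mp hj1
        have h3 := hadj j
        rw [e1, e2] at h3
        omega)

/-- With `ℓ(0) = 0` and `ℓ(n) = 1 + max{i : d_i(n) = 1}` for `n ≥ 1`, we have
`ℓ(n) - ℓ(n-1) = 1` iff `n = 1`, or `n = L_{2i}` for some `i ≥ 1`, or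
`n = L_{2i-1} + 1` for some `i ≥ 1`. Here `d n` denotes the canonical
φ-representation of `n`, and `ℓ` is characterized by the hypotheses. -/
theorem length_increase_iff
    (d : ℕ → ℤ →₀ ℕ) (hd : ∀ n : ℕ, IsCanonRep n (d n))
    (ℓ : ℕ → ℕ) (hℓ0 : ℓ 0 = 0)
    (hℓ : ∀ n : ℕ, 1 ≤ n → ∃ i : ℤ, d n i = 1 ∧ (∀ j : ℤ, d n j = 1 → j ≤ i) ∧
        (ℓ n : ℤ) = i + 1) :
    ∀ n : ℕ, 1 ≤ n →
      (ℓ n = ℓ (n - 1) + 1 ↔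
        (n = 1 ∨ (∃ i : ℕ, 1 ≤ i ∧ n = lucas (2 * i)) ∨
          (∃ i : ℕ, 1 ≤ i ∧ n = lucas (2 * i - 1) + 1))) := by
  -- the bracketing property of ℓ
  have key : ∀ m : ℕ, 1 ≤ m →
      1 ≤ ℓ m ∧ phi ^ (ℓ m - 1) ≤ (m : ℝ) ∧ (m : ℝ) < phi ^ (ℓ m) := by
    intro m hm
    obtain ⟨i, h1, hmax, hi⟩ := hℓ m hm
    obtain ⟨hlo, hhi⟩ := bracket (hd m) h1 hmax
    have hi0 : 0 ≤ i := by
      by_contra hcon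
      push_neg at hcon
      have hle1 : phi ^ (i + 1) ≤ 1 :=
        zpow_le_one_of_nonpos₀ (le_of_lt phi_gt_one) (by omega)
      have hm1 : (1 : ℝ) ≤ (m : ℝ) := by exact_mod_cast hm
      linarith
    have hl1 : 1 ≤ ℓ m := by omega
    have e1 : ((ℓ m - 1 : ℕ) : ℤ) = i := by
      push_cast [hl1]
      omega
    have e2 : ((ℓ m : ℕ) : ℤ) = i + 1 := hi
    refine ⟨hl1, ?_, ?_⟩
    · calc phi ^ (ℓ m - 1) = phi ^ (((ℓ m - 1 : ℕ) : ℤ)) := (zpow_natCast phi _).symm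
        _ = phi ^ i := by rw [e1]
        _ ≤ (m : ℝ) := hlo
    · calc (m : ℝ) < phi ^ (i + 1) := hhi
        _ = phi ^ (((ℓ m : ℕ) : ℤ)) := by rw [e2]
        _ = phi ^ (ℓ m : ℕ) := zpow_natCast phi _
  have ellEq : ∀ m k : ℕ, 1 ≤ m → phi ^ k ≤ (m : ℝ) → (m : ℝ) < phi ^ (k + 1) →
      ℓ m = k + 1 := by
    intro m k hm hlo hhi
    obtain ⟨hl1, hblo, hbhi⟩ := key m hm
    have hb2 : (m : ℝ) < phi ^ (ℓ m - 1 + 1) := by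
      rw [show ℓ m - 1 + 1 = ℓ m by omega]; exact hbhi
    have := unique_exp hblo hb2 hlo hhi
    omega
  intro n hn
  by_cases hone : n = 1
  · subst hone
    have hl1 : ℓ 1 = 1 := by
      have := ellEq 1 0 le_rfl (by norm_num) (by simpa using phi_gt_one)
      omega
    rw [show (1:ℕ) - 1 = 0 from rfl, hℓ0, hl1]
    simp
  · have hn2 : 2 ≤ n := by omega
    have hn1 : 1 ≤ n - 1 := by omega
    have hc : ((n - 1 : ℕ) : ℝ) = (n : ℝ) - 1 := by
      have := Nat.cast_sub (R := ℝ) hn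
      simpa using this
    obtain ⟨hl1n, hlon, hhin⟩ := key n hn
    obtain ⟨hl1p, hlop, hhip⟩ := key (n - 1) hn1
    constructor
    · intro hjump
      set k := ℓ (n - 1) with hk
      have hk1 : 1 ≤ k := hl1p
      have hA : phi ^ k ≤ (n : ℝ) := by
        rw [show k = ℓ n - 1 by omega]; exact hlon
      have hB : (n : ℝ) - 1 < phi ^ k := by rw [← hc]; exact hhip
      have hL := lucas_real k
      have habs := psi_pow_lt_one k hk1
      rw [abs_lt] at habs
      rcases Nat.even_or_odd k with ⟨i, hki⟩ | ⟨j, hkj⟩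
      · -- k even: n = lucas k
        have hpos : 0 < psi ^ k := by
          rw [show k = 2 * i by omega]; exact psi_pow_even_pos i
        have c1 : lucas k < n + 1 := by
          exact_mod_cast show (lucas k : ℝ) < (n : ℝ) + 1 by linarith
        have c2 : n < lucas k + 1 := by
          exact_mod_cast show (n : ℝ) < (lucas k : ℝ) + 1 by linarith
        refine Or.inr (Or.inl ⟨i, by omega, ?_⟩)
        rw [show 2 * i = k by omega]
        omega
      · -- k odd: n = lucas k + 1
        have hneg : psi ^ k < 0 := by
          rw [show k = 2 * j + 1 by omega]; exact psi_pow_odd_neg j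
        have c1 : lucas k + 1 < n + 1 := by
          exact_mod_cast show (lucas k : ℝ) + 1 < (n : ℝ) + 1 by linarith
        have c2 : n < lucas k + 2 := by
          exact_mod_cast show (n : ℝ) < (lucas k : ℝ) + 2 by linarith
        refine Or.inr (Or.inr ⟨j + 1, by omega, ?_⟩)
        rw [show 2 * (j + 1) - 1 = k by omega]
        omega
    · intro hrhs
      rcases hrhs with h1' | ⟨i, hi1, hni⟩ | ⟨i, hi1, hni⟩
      · exact absurd h1' hone
      · -- n = lucas (2i), i ≥ 1
        obtain ⟨k', hk'⟩ : ∃ k', 2 * i = k' + 2 := ⟨2 * i - 2, by omega⟩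
        have hL := lucas_real (2 * i)
        rw [hk'] at hL
        have hpos : 0 < psi ^ (k' + 2) := by
          rw [show k' + 2 = 2 * i from hk'.symm]; exact psi_pow_even_pos i
        have habs := psi_pow_lt_one (k' + 2) (by omega)
        rw [abs_lt] at habs
        have hneq : (n : ℝ) = phi ^ (k' + 2) + psi ^ (k' + 2) := by
          rw [hni, hk']; exact hL
        have h3 := phi_pow_add_two k'
        have h4 := phi_pow_add_two (k' + 1)
        have h5 := one_le_phi_pow k'
        have h6 := one_le_phi_pow (k' + 1)
        have hlA : ℓ n = k' + 3 := by
          have := ellEq n (k' + 2) hn (by linarith) (by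
            show (n : ℝ) < phi ^ (k' + 3)
            linarith)
          omega
        have hlB : ℓ (n - 1) = k' + 2 := by
          exact ellEq (n - 1) (k' + 1) hn1
            (by rw [hc]; linarith) (by rw [hc]; show _ < phi ^ (k' + 2); linarith)
        omega
      · -- n = lucas (2i - 1) + 1, i ≥ 1
        obtain ⟨j, hj⟩ : ∃ j, 2 * i - 1 = 2 * j + 1 := ⟨i - 1, by omega⟩
        rw [hj] at hni
        have hL := lucas_real (2 * j + 1)
        have hneg : psi ^ (2 * j + 1) < 0 := psi_pow_odd_neg j
        have habs := psi_pow_lt_one (2 * j + 1) (by omega)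
        rw [abs_lt] at habs
        have hneq : (n : ℝ) = phi ^ (2 * j + 1) + psi ^ (2 * j + 1) + 1 := by
          rw [hni]; push_cast; rw [hL]
        have h3 := phi_pow_add_two (2 * j)
        have h5 := one_le_phi_pow (2 * j)
        have hlA : ℓ n = 2 * j + 2 := by
          exact ellEq n (2 * j + 1) hn (by linarith)
            (by show (n : ℝ) < phi ^ (2 * j + 2); linarith)
        have hlB : ℓ (n - 1) = 2 * j + 1 := by
          have hlow : phi ^ (2 * j) ≤ ((n - 1 : ℕ) : ℝ) := by
            have := phi_pow_le_lucas (2 * j + 1) (by omega)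
            rw [show 2 * j + 1 - 1 = 2 * j by omega] at this
            rw [hc]
            have hcast : ((lucas (2 * j + 1) : ℕ) : ℝ) = (n : ℝ) - 1 := by
              rw [hni]; push_cast; ring
            rw [hcast] at this
            linarith
          exact ellEq (n - 1) (2 * j) hn1 hlow
            (by rw [hc]; show _ < phi ^ (2 * j + 1); linarith)
        omega
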